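/- For any s ∈ ℕ there exists r ∈ ℕ such that for every abelian group G, every IP*_s set A ⊆ G, and every IP_r set B ⊆ G, the intersection A ∩ B contains an IP_s set; that is, there exist x_1,…,x_s ∈ G with FS(x_1,…,x_s) ⊆ A ∩ B. -/

import Mathlib

open Set

/-- Finite sums set `FS(x₁,…,x_r)`. -/
def FSfin {G : Type*} [AddCommMonoid G] {r : ℕ} (x : Fin r → G) : Set G :=
  {g | ∃ α : Finset (Fin r), α.Nonempty ∧ ∑ i ∈ α, x i = g}

/-- `A` is an IP_r set: it contains `FS(x₁,…,x_r)` for some `x₁,…,x_r`. -/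
def IsIPr {G : Type*} [AddCommMonoid G] (r : ℕ) (A : Set G) : Prop :=
  ∃ x : Fin r → G, FSfin x ⊆ A

/-- `A` is an IP*_r set: it meets every IP_r set. -/
def IsIPrStar {G : Type*} [AddCommMonoid G] (r : ℕ) (A : Set G) : Prop :=
  ∀ B : Set G, IsIPr r B → (A ∩ B).Nonempty

namespace IPAux

/-- Binary support of a natural number, as a `Finset`. -/
def bsupp (n : ℕ) : Finset ℕ := n.bitIndices.toFinset

lemma bsupp_nonempty {n : ℕ} (hn : n ≠ 0) : (bsupp n).Nonempty := by
  rcases h : n.bitIndices with _ | ⟨a, L⟩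
  · exfalso
    apply hn
    have := Nat.twoPowSum_bitIndices n
    rw [h] at this
    simpa using this.symm
  · exact ⟨a, by simp [bsupp, h]⟩

lemma bitIndices_lt {n K : ℕ} (h : n < 2 ^ K) {i : ℕ} (hi : i ∈ n.bitIndices) : i < K := by
  have h2 := Nat.two_pow_le_of_mem_bitIndices hi
  exact (Nat.pow_lt_pow_iff_right (by norm_num)).1 (lt_of_le_of_lt h2 h)

lemma mem_bsupp_lt {n K : ℕ} (h : n < 2 ^ K) {i : ℕ} (hi : i ∈ bsupp n) : i < K :=
  bitIndices_lt h (List.mem_toFinset.1 hi)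

lemma le_of_mem_bsupp_dvd {n M : ℕ} (h : 2 ^ M ∣ n) {i : ℕ} (hi : i ∈ bsupp n) : M ≤ i := by
  obtain ⟨w, rfl⟩ := h
  have := List.mem_toFinset.1 hi
  rw [Nat.bitIndices_two_pow_mul] at this
  obtain ⟨j, -, rfl⟩ := List.mem_map.1 this
  omega

lemma bitIndices_add {a w k : ℕ} (h : a < 2 ^ k) :
    (a + 2 ^ k * w).bitIndices = a.bitIndices ++ (w.bitIndices.map (· + k)) := by
  have hLlt : ∀ i ∈ a.bitIndices, i < k := fun i hi => bitIndices_lt h hi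
  have hsorted : List.Pairwise (· < ·) (a.bitIndices ++ (w.bitIndices.map (· + k))) := by
    rw [List.pairwise_append]
    refine ⟨Nat.bitIndices_sorted.pairwise, ?_, ?_⟩
    · exact List.pairwise_map.2 (List.Pairwise.imp (fun hab => by omega) Nat.bitIndices_sorted.pairwise)
    · intro i hi j hj
      obtain ⟨j', -, rfl⟩ := List.mem_map.1 hj
      have := hLlt i hi
      omega
  have hsum : ((a.bitIndices ++ (w.bitIndices.map (· + k))).map (fun i => 2 ^ i)).sum
      = a + 2 ^ k * w := by
    rw [List.map_append, List.sum_append, Nat.twoPowSum_bitIndices]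
    congr 1
    rw [List.map_map]
    have hfe : ((fun i => 2 ^ i) ∘ (· + k)) = fun i => 2 ^ k * 2 ^ i := by
      funext i
      simp [pow_add, mul_comm]
    rw [hfe, List.sum_map_mul_left, Nat.twoPowSum_bitIndices]
  conv_lhs => rw [← hsum]
  exact Nat.bitIndices_twoPowsum hsorted.sortedLT

lemma bsupp_add {a w k : ℕ} (h : a < 2 ^ k) :
    bsupp (a + 2 ^ k * w) = bsupp a ∪ bsupp (2 ^ k * w) := by
  unfold bsupp
  rw [bitIndices_add h, List.toFinset_append, Nat.bitIndices_two_pow_mul]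

/-- Pigeonhole: some consecutive block within `[p, ∞)` has sum divisible by `2^M`. -/
lemma exists_block (b : ℕ → ℕ) (p M : ℕ) :
    ∃ l, p ≤ l ∧ ∃ r, l < r ∧ 2 ^ M ∣ ∑ i ∈ Finset.Ico l r, b i := by
  haveI : NeZero (2 ^ M) := ⟨pow_ne_zero M two_ne_zero⟩
  have hcard : Fintype.card (ZMod (2 ^ M)) < Fintype.card (Fin (2 ^ M + 1)) := by
    simp [ZMod.card]
  obtain ⟨t₁, t₂, hne, heq⟩ := Fintype.exists_ne_map_eq_of_card_lt
    (fun t : Fin (2 ^ M + 1) => ((∑ i ∈ Finset.Ico p (p + (t : ℕ)), b i : ℕ) : ZMod (2 ^ M)))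
    hcard
  have key : ∀ u v : Fin (2 ^ M + 1), u < v →
      ((∑ i ∈ Finset.Ico p (p + (u : ℕ)), b i : ℕ) : ZMod (2 ^ M)) =
      ((∑ i ∈ Finset.Ico p (p + (v : ℕ)), b i : ℕ) : ZMod (2 ^ M)) →
      ∃ l, p ≤ l ∧ ∃ r, l < r ∧ 2 ^ M ∣ ∑ i ∈ Finset.Ico l r, b i := by
    intro u v huv he
    refine ⟨p + (u : ℕ), by omega, p + (v : ℕ), by omega, ?_⟩
    have hsplit : ∑ i ∈ Finset.Ico p (p + (u : ℕ)), b i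
        + ∑ i ∈ Finset.Ico (p + (u : ℕ)) (p + (v : ℕ)), b i
        = ∑ i ∈ Finset.Ico p (p + (v : ℕ)), b i :=
      Finset.sum_Ico_consecutive _ (by omega) (by omega)
    have hz : ((∑ i ∈ Finset.Ico (p + (u : ℕ)) (p + (v : ℕ)), b i : ℕ) : ZMod (2 ^ M)) = 0 := by
      have h2 := congrArg (fun n : ℕ => (n : ZMod (2 ^ M))) hsplit
      simp only [Nat.cast_add] at h2
      rw [← he] at h2
      exact (left_eq_add.1 h2.symm)
    exact (ZMod.natCast_eq_zero_iff _ _).1 hz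
  rcases hne.lt_or_gt with h | h
  · exact key t₁ t₂ h heq
  · exact key t₂ t₁ h heq.symm


lemma FS_pos {σ : Stream' ℕ} {n : ℕ} (hn : n ∈ Hindman.FS σ) :
    (∀ i, 0 < σ.get i) → 0 < n := by
  induction hn with
  | head' a => exact fun h => h 0
  | tail' a m hm ih => exact fun h => ih fun i => by simpa [Stream'.get_tail] using h (i + 1)
  | cons' a m hm ih =>
      intro h
      exact Nat.add_pos_right _ (ih fun i => by simpa [Stream'.get_tail] using h (i + 1))

/-- Infinite 2-color finite-unions theorem, with pairwise disjoint nonempty finsets. -/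
lemma exists_mono_family (c : Finset ℕ → Bool) :
    ∃ (t : Bool) (α : ℕ → Finset ℕ),
      (∀ j, (α j).Nonempty) ∧ (∀ j k, j < k → Disjoint (α j) (α k)) ∧
      (∀ β : Finset ℕ, β.Nonempty → c (β.biUnion α) = t) := by
  classical
  set a : Stream' ℕ := fun _ => 1 with ha
  have hapos : ∀ i, 0 < a.get i := fun _ => one_pos
  set cells : Set (Set ℕ) :=
    {{n | 0 < n ∧ c (bsupp n) = true}, {n | 0 < n ∧ c (bsupp n) = false}} with hcells
  have hfin : cells.Finite := (Set.finite_singleton _).insert _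
  have hcov : Hindman.FS a ⊆ ⋃₀ cells := by
    intro n hn
    have hpos := FS_pos hn hapos
    rcases Bool.eq_false_or_eq_true (c (bsupp n)) with h | h
    · exact ⟨_, Or.inl rfl, hpos, h⟩
    · exact ⟨_, Or.inr rfl, hpos, h⟩
  obtain ⟨C, hCmem, b, hFSb⟩ := Hindman.FS_partition_regular a cells hfin hcov
  have hC : ∃ t : Bool, ∀ n ∈ Hindman.FS b, 0 < n ∧ c (bsupp n) = t := by
    rcases hCmem with h | h
    · exact ⟨true, fun n hn => by have := hFSb hn; rwa [h] at this⟩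
    · exact ⟨false, fun n hn => by have := hFSb hn; rw [Set.mem_singleton_iff] at h; rwa [h] at this⟩
  obtain ⟨t, hC⟩ := hC
  have hbpos : ∀ i, 0 < b.get i := fun i => (hC _ (Hindman.FS.singleton b i)).1
  -- total sum function
  set T : ℕ → ℕ := fun p => ∑ i ∈ Finset.range p, b.get i with hT
  have hTmono : Monotone T := fun p q hpq =>
    Finset.sum_le_sum_of_subset (Finset.range_subset_range.2 hpq)
  choose l hl r hr hdvd using fun p M => exists_block (fun i => b.get i) p M
  -- positions
  set pfun : ℕ → ℕ := fun j => Nat.rec 0 (fun _ pj => r pj (T pj + 1)) j with hpfun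
  have hpsucc : ∀ j, pfun (j + 1) = r (pfun j) (T (pfun j) + 1) := fun j => rfl
  set lfun : ℕ → ℕ := fun j => l (pfun j) (T (pfun j) + 1) with hlfun
  set x : ℕ → ℕ := fun j => ∑ i ∈ Finset.Ico (lfun j) (pfun (j + 1)), b.get i with hx
  have hple : ∀ j, pfun j ≤ lfun j := fun j => hl _ _
  have hlr : ∀ j, lfun j < pfun (j + 1) := fun j => hr (pfun j) (T (pfun j) + 1)
  have hdvdx : ∀ j, 2 ^ (T (pfun j) + 1) ∣ x j := fun j => hdvd (pfun j) (T (pfun j) + 1)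
  have hpmono : StrictMono pfun :=
    strictMono_nat_of_lt_succ fun j => lt_of_le_of_lt (hple j) (hlr j)
  have hxpos : ∀ j, 0 < x j := fun j =>
    Finset.sum_pos (fun i _ => hbpos i) (Finset.nonempty_Ico.2 (hlr j))
  -- T (pfun j) + x j ≤ T (pfun (j+1))
  have hTstep : ∀ j, T (pfun j) + x j ≤ T (pfun (j + 1)) := by
    intro j
    have h1 : T (pfun j) ≤ T (lfun j) := hTmono (hple j)
    have h2 : T (lfun j) + x j = T (pfun (j + 1)) := by
      rw [hT]
      simp only [Finset.range_eq_Ico]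
      exact Finset.sum_Ico_consecutive _ (Nat.zero_le _) (le_of_lt (hlr j))
    omega
  -- partial sums bound
  have hpartial : ∀ j, ∑ k ∈ Finset.range j, x k ≤ T (pfun j) := by
    intro j
    induction j with
    | zero => simp
    | succ j ih =>
        rw [Finset.sum_range_succ]
        have := hTstep j
        omega
  -- supports
  have hsupp_lb : ∀ j, ∀ i ∈ bsupp (x j), T (pfun j) + 1 ≤ i := fun j i hi =>
    le_of_mem_bsupp_dvd (hdvdx j) hi
  have hsupp_ub : ∀ j, ∀ i ∈ bsupp (x j), i < T (pfun (j + 1)) + 1 := by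
    intro j i hi
    refine mem_bsupp_lt ?_ hi
    have h1 := hTstep j
    have h2 := Nat.lt_two_pow_self (n := T (pfun (j + 1)))
    have h3 : (2:ℕ) ^ (T (pfun (j + 1))) ≤ 2 ^ (T (pfun (j + 1)) + 1) :=
      Nat.pow_le_pow_right (by norm_num) (Nat.le_succ _)
    omega
  have hTpm : ∀ j k, j ≤ k → T (pfun j) ≤ T (pfun k) := fun j k hjk =>
    hTmono (hpmono.monotone hjk)
  have hdisj : ∀ j k, j < k → Disjoint (bsupp (x j)) (bsupp (x k)) := by
    intro j k hjk
    rw [Finset.disjoint_left]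
    intro i hij hik
    have h1 := hsupp_ub j i hij
    have h2 := hsupp_lb k i hik
    have h3 := hTpm (j + 1) k hjk
    omega
  -- sums over index sets lie in FS b
  have hsum_mem : ∀ β : Finset ℕ, β.Nonempty → (∑ j ∈ β, x j) ∈ Hindman.FS b := by
    intro β hβ
    have hpd : (↑β : Set ℕ).PairwiseDisjoint (fun j => Finset.Ico (lfun j) (pfun (j + 1))) := by
      intro j _ k _ hjk
      have key : ∀ u v : ℕ, u < v →
          Disjoint (Finset.Ico (lfun u) (pfun (u + 1))) (Finset.Ico (lfun v) (pfun (v + 1))) := by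
        intro u v huv
        rw [Finset.disjoint_left]
        intro i hiu hiv
        rw [Finset.mem_Ico] at hiu hiv
        have h1 : pfun (u + 1) ≤ pfun v := hpmono.monotone huv
        have h2 := hple v
        omega
      rcases hjk.lt_or_gt with h | h
      · exact key j k h
      · exact (key k j h).symm
    have hrw : ∑ j ∈ β, x j = ∑ i ∈ β.biUnion (fun j => Finset.Ico (lfun j) (pfun (j + 1))),
        b.get i := (Finset.sum_biUnion hpd).symm
    rw [hrw]
    refine Hindman.FS.finset_sum b _ ?_
    obtain ⟨j, hj⟩ := hβ
    exact ⟨lfun j, Finset.mem_biUnion.2 ⟨j, hj, Finset.mem_Ico.2 ⟨le_refl _, hlr j⟩⟩⟩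
  -- supports of sums
  have hbsupp_sum : ∀ β : Finset ℕ, β.Nonempty →
      bsupp (∑ j ∈ β, x j) = β.biUnion (fun j => bsupp (x j)) := by
    intro β
    induction β using Finset.strongInduction with
    | _ β ih =>
      intro hβ
      set m := β.max' hβ with hm
      have hmem : m ∈ β := β.max'_mem hβ
      rcases (β.erase m).eq_empty_or_nonempty with he | he
      · have hβm : β = {m} := by
          apply Finset.eq_singleton_iff_unique_mem.2
          refine ⟨hmem, fun y hy => ?_⟩
          by_contra hne
          exact (Finset.notMem_empty y) (he ▸ Finset.mem_erase.2 ⟨hne, hy⟩)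
        rw [hβm]
        simp
      · have hsum : ∑ j ∈ β, x j = (∑ j ∈ β.erase m, x j) + x m :=
          (Finset.sum_erase_add β _ hmem).symm
        have hihe := ih (β.erase m) (Finset.erase_ssubset hmem) he
        have hS'lt : ∑ j ∈ β.erase m, x j < 2 ^ (T (pfun m) + 1) := by
          have hsub : β.erase m ⊆ Finset.range m := by
            intro y hy
            rw [Finset.mem_erase] at hy
            rw [Finset.mem_range]
            exact lt_of_le_of_ne (β.le_max' y hy.2) hy.1
          have h1 : ∑ j ∈ β.erase m, x j ≤ ∑ j ∈ Finset.range m, x j :=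
            Finset.sum_le_sum_of_subset hsub
          have h2 := hpartial m
          have h3 := Nat.lt_two_pow_self (n := T (pfun m))
          have h4 : (2:ℕ) ^ (T (pfun m)) ≤ 2 ^ (T (pfun m) + 1) :=
            Nat.pow_le_pow_right (by norm_num) (Nat.le_succ _)
          omega
        obtain ⟨w, hw⟩ := hdvdx m
        rw [hsum, hw, bsupp_add hS'lt, ← hw, hihe]
        conv_rhs => rw [← Finset.insert_erase hmem]
        rw [Finset.biUnion_insert]
        exact Finset.union_comm _ _
  exact ⟨t, fun j => bsupp (x j),
    fun j => bsupp_nonempty (hxpos j).ne',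
    hdisj,
    fun β hβ => by rw [← hbsupp_sum β hβ]; exact (hC _ (hsum_mem β hβ)).2⟩

/-- Finite 2-color finite-unions theorem, via compactness. -/
lemma fin_union (s : ℕ) :
    ∃ r : ℕ, ∀ c : Finset ℕ → Bool, ∃ (t : Bool) (α : Fin s → Finset ℕ),
      (∀ j, (α j).Nonempty) ∧ (∀ j, α j ⊆ Finset.range r) ∧
      (∀ j k : Fin s, j ≠ k → Disjoint (α j) (α k)) ∧
      (∀ β : Finset (Fin s), β.Nonempty → c (β.biUnion α) = t) := by
  classical
  by_contra hcon
  have hbad : ∀ r : ℕ, ∃ c : Finset ℕ → Bool, ¬ (∃ (t : Bool) (α : Fin s → Finset ℕ),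
      (∀ j, (α j).Nonempty) ∧ (∀ j, α j ⊆ Finset.range r) ∧
      (∀ j k : Fin s, j ≠ k → Disjoint (α j) (α k)) ∧
      (∀ β : Finset (Fin s), β.Nonempty → c (β.biUnion α) = t)) := by
    intro r
    by_contra h
    exact hcon ⟨r, fun c => not_not.1 (not_exists.1 h c)⟩
  choose cf hcf using hbad
  haveI : Filter.NeBot (Filter.atTop : Filter ℕ) := Filter.atTop_neBot
  set U : Ultrafilter ℕ := Ultrafilter.of Filter.atTop with hU
  set climit : Finset ℕ → Bool := fun γ => if {r | cf r γ = true} ∈ U then true else false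
    with hclimit
  have hlim : ∀ γ, {r | cf r γ = climit γ} ∈ U := by
    intro γ
    by_cases h : {r | cf r γ = true} ∈ U
    · simp only [hclimit, if_pos h]
      exact h
    · have h2 : {r | cf r γ = true}ᶜ ∈ U := Ultrafilter.compl_mem_iff_notMem.2 h
      have h3 : {r | cf r γ = true}ᶜ = {r | cf r γ = false} := by
        ext r'
        simp [Bool.not_eq_true]
      rw [h3] at h2
      simpa [hclimit, h] using h2
  obtain ⟨t, α, hne, hdisj, hmono⟩ := exists_mono_family climit
  set α' : Fin s → Finset ℕ := fun j => α j.val with hα'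
  set N : ℕ := ((Finset.range s).sup fun j => (α j).sup id) + 1 with hN
  have hsub : ∀ j : Fin s, α' j ⊆ Finset.range N := by
    intro j i hi
    rw [Finset.mem_range]
    have h1 : i ≤ (α j.val).sup id := Finset.le_sup (f := id) hi
    have h2 : (α j.val).sup id ≤ (Finset.range s).sup fun k => (α k).sup id :=
      Finset.le_sup (f := fun k => (α k).sup id) (Finset.mem_range.2 j.isLt)
    omega
  have hS : (⋂ β : Finset (Fin s), {r | cf r (β.biUnion α') = climit (β.biUnion α')}) ∈ U :=
    Filter.iInter_mem.2 fun β => hlim _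
  have hge : {r | N ≤ r} ∈ U := Ultrafilter.of_le _ (Filter.mem_atTop N)
  obtain ⟨r, hr1, hr2⟩ := Filter.nonempty_of_mem (Filter.inter_mem hS hge)
  apply hcf r
  refine ⟨t, α', fun j => hne j.val,
    fun j => (hsub j).trans (Finset.range_subset_range.2 hr2), ?_, ?_⟩
  · intro j k hjk
    have hv : (j : ℕ) ≠ (k : ℕ) := fun h => hjk (Fin.val_injective h)
    rcases hv.lt_or_gt with h | h
    · exact hdisj _ _ h
    · exact (hdisj _ _ h).symm
  · intro β hβ
    have h1 : cf r (β.biUnion α') = climit (β.biUnion α') := Set.mem_iInter.1 hr1 β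
    have h2 : climit (β.biUnion α') = t := by
      have himg : β.biUnion α' = (β.image Fin.val).biUnion α := by
        rw [Finset.image_biUnion]
      rw [himg]
      exact hmono _ (hβ.image _)
    rw [h1, h2]

end IPAux

/-- For any `s` there is `r` such that, in any abelian group, any IP*_s set intersects
any IP_r set in an IP_s set. -/
theorem ipsstar_inter_ipr_contains_ips (s : ℕ) :
    ∃ r : ℕ, ∀ (G : Type*) [AddCommGroup G] (A B : Set G),
      IsIPrStar s A → IsIPr r B →
        ∃ x : Fin s → G, FSfin x ⊆ A ∩ B := by
  classical
  obtain ⟨r, hr⟩ := IPAux.fin_union s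
  refine ⟨r, ?_⟩
  intro G _ A B hA hB
  obtain ⟨y, hy⟩ := hB
  set yext : ℕ → G := fun i => if h : i < r then y ⟨i, h⟩ else 0 with hyext
  set c : Finset ℕ → Bool := fun γ => decide (∑ i ∈ γ, yext i ∈ A) with hc
  obtain ⟨t, α, hne, hsub, hdisj, hmono⟩ := hr c
  set x : Fin s → G := fun j => ∑ i ∈ α j, yext i with hxdef
  have hsums : ∀ β : Finset (Fin s), ∑ j ∈ β, x j = ∑ i ∈ β.biUnion α, yext i :=
    fun β => (Finset.sum_biUnion (fun j _ k _ hjk => hdisj j k hjk)).symm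
  have hFS : ∀ β : Finset (Fin s), β.Nonempty → (∑ i ∈ β.biUnion α, yext i) ∈ FSfin y := by
    intro β hβ
    set γ := β.biUnion α with hγ
    have hγr : ∀ m ∈ γ, m < r := by
      intro m hm
      obtain ⟨j, hj, hmj⟩ := Finset.mem_biUnion.1 hm
      exact Finset.mem_range.1 (hsub j hmj)
    have hγne : γ.Nonempty := by
      obtain ⟨j, hj⟩ := hβ
      obtain ⟨i, hi⟩ := hne j
      exact ⟨i, Finset.mem_biUnion.2 ⟨j, hj, hi⟩⟩
    refine ⟨γ.attachFin hγr, ?_, ?_⟩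
    · rw [← Finset.card_pos, Finset.card_attachFin]
      exact Finset.card_pos.2 hγne
    · have himg : (γ.attachFin hγr).image Fin.val = γ := by
        ext i
        simp only [Finset.mem_image]
        constructor
        · rintro ⟨a, ha, rfl⟩
          exact (Finset.mem_attachFin _).1 ha
        · intro hi
          exact ⟨⟨i, hγr i hi⟩, (Finset.mem_attachFin _).2 hi, rfl⟩
      calc ∑ i ∈ γ.attachFin hγr, y i
          = ∑ i ∈ γ.attachFin hγr, yext i.val := by
            refine Finset.sum_congr rfl fun i _ => ?_
            simp [hyext, i.isLt]
        _ = ∑ m ∈ (γ.attachFin hγr).image Fin.val, yext m :=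
            (Finset.sum_image (fun a _ b _ h => Fin.val_injective h)).symm
        _ = ∑ m ∈ γ, yext m := by rw [himg]
  cases t with
  | true =>
    refine ⟨x, ?_⟩
    rintro g ⟨β, hβ, rfl⟩
    constructor
    · have h2 : (∑ i ∈ β.biUnion α, yext i) ∈ A := of_decide_eq_true (hmono β hβ)
      rw [hsums β]
      exact h2
    · rw [hsums β]
      exact hy (hFS β hβ)
  | false =>
    exfalso
    obtain ⟨g, hgA, β, hβ, hβs⟩ := hA (FSfin x) ⟨x, subset_rfl⟩
    have h2 : ¬ (∑ i ∈ β.biUnion α, yext i) ∈ A := of_decide_eq_false (hmono β hβ)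
    apply h2
    rw [← hsums β, hβs]
    exact hgA
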